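/- arXiv:1603.07410 — 2 statements merged into one kernel-verified Lean document; each statement's English description precedes it below -/
import Mathlib

section
/- With t_x = (x + q)·t*/(u + q) and x ≤ u, we have t_x ≤ t*; hence filtering by the conservative Jaccard threshold s* = t*/(u/q + 1 - t*) introduces no false negatives: every domain X with containment t(Q,X) ≥ t* satisfies s(Q,X) ≥ s*. -/
theorem conservative_threshold_no_false_negatives (q x u tstar : ℝ)
    (hq : 0 < q) (hx : 0 < x) (hxu : x ≤ u) (ht0 : 0 < tstar) (ht1 : tstar ≤ 1) :
    (x + q) * tstar / (u + q) ≤ tstar ∧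
    ∀ t : ℝ, tstar ≤ t → t ≤ 1 →
      tstar / (u / q + 1 - tstar) ≤ t / (x / q + 1 - t) := by
  have huq : 0 < u + q := by linarith
  constructor
  · rw [div_le_iff₀ huq]
    nlinarith
  · intro t htt ht1'
    have hxq : 0 < x / q := div_pos hx hq
    have hd1 : 0 < x / q + 1 - t := by linarith
    have hd2 : x / q + 1 - t ≤ u / q + 1 - tstar := by
      have h : x / q ≤ u / q := div_le_div_of_nonneg_right hxu hq.le
      linarith
    exact div_le_div₀ (le_trans ht0.le htt) htt hd1 hd2
end

section
/- For any finite sets X, Y and a uniformly random injective hash assigning distinct values to elements of X ∪ Y (i.e., a uniformly random linear order on X ∪ Y), the probability that the minimum of X and the minimum of Y coincide equals |X ∩ Y| / |X ∪ Y|. -/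
open Finset

theorem minhash_collision_probability {α : Type*} [Fintype α] [DecidableEq α]
    [LinearOrder α] (X Y : Finset α) (hX : X.Nonempty) (hY : Y.Nonempty) :
    ((Finset.univ.filter fun σ : Equiv.Perm α =>
        (X.image σ).min' (hX.image σ) = (Y.image σ).min' (hY.image σ)).card : ℝ) /
      (Fintype.card (Equiv.Perm α) : ℝ)
    = ((X ∩ Y).card : ℝ) / ((X ∪ Y).card : ℝ) := by
  classical
  have hU : (X ∪ Y).Nonempty := hX.mono subset_union_left
  -- c a = number of permutations whose argmin over X ∪ Y is a
  set c : α → ℕ := fun a =>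
    (univ.filter fun σ : Equiv.Perm α =>
      σ a = ((X ∪ Y).image σ).min' (hU.image σ)).card with hc
  -- swap fixes X ∪ Y
  have himg : ∀ a ∈ X ∪ Y, ∀ b ∈ X ∪ Y,
      (X ∪ Y).image (Equiv.swap a b) = X ∪ Y := by
    intro a ha b hb
    apply Finset.eq_of_subset_of_card_le
    · intro x hx
      rcases Finset.mem_image.mp hx with ⟨y, hy, rfl⟩
      rcases eq_or_ne y a with rfl | hya
      · simpa [Equiv.swap_apply_left] using hb
      rcases eq_or_ne y b with rfl | hyb
      · simpa [Equiv.swap_apply_right] using ha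
      · simpa [Equiv.swap_apply_of_ne_of_ne hya hyb] using hy
    · rw [Finset.card_image_of_injective _ (Equiv.injective _)]
  -- key equivalence
  have key : ∀ σ : Equiv.Perm α,
      ((X.image σ).min' (hX.image σ) = (Y.image σ).min' (hY.image σ)) ↔
      ∃ a ∈ X ∩ Y, σ a = ((X ∪ Y).image σ).min' (hU.image σ) := by
    intro σ
    set m := ((X ∪ Y).image σ).min' (hU.image σ) with hm
    have hmem : m ∈ (X ∪ Y).image σ := min'_mem _ _
    have hXsub : X.image σ ⊆ (X ∪ Y).image σ :=
      Finset.image_subset_image subset_union_left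
    have hYsub : Y.image σ ⊆ (X ∪ Y).image σ :=
      Finset.image_subset_image subset_union_right
    have hmX : m ≤ (X.image σ).min' (hX.image σ) :=
      min'_subset _ hXsub
    have hmY : m ≤ (Y.image σ).min' (hY.image σ) :=
      min'_subset _ hYsub
    constructor
    · intro h
      have hcases : m ∈ X.image σ ∪ Y.image σ := by
        rwa [← Finset.image_union]
      have hmeq : m = (X.image σ).min' (hX.image σ) := by
        rcases Finset.mem_union.mp hcases with h1 | h1
        · exact le_antisymm hmX (min'_le _ _ h1)
        · exact le_antisymm hmX (h ▸ min'_le _ _ h1)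
      have hX' : m ∈ X.image σ := hmeq ▸ min'_mem _ _
      have hY' : m ∈ Y.image σ := (h ▸ hmeq) ▸ min'_mem _ _
      rcases Finset.mem_image.mp hX' with ⟨x, hx, hxm⟩
      rcases Finset.mem_image.mp hY' with ⟨y, hy, hym⟩
      have hxy : x = y := σ.injective (hxm.trans hym.symm)
      exact ⟨x, Finset.mem_inter.mpr ⟨hx, hxy ▸ hy⟩, hxm⟩
    · rintro ⟨a, ha, hPa⟩
      have haX := (Finset.mem_inter.mp ha).1
      have haY := (Finset.mem_inter.mp ha).2
      have h1 : (X.image σ).min' (hX.image σ) = m :=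
        le_antisymm (hPa ▸ min'_le _ _ (Finset.mem_image_of_mem σ haX)) hmX
      have h2 : (Y.image σ).min' (hY.image σ) = m :=
        le_antisymm (hPa ▸ min'_le _ _ (Finset.mem_image_of_mem σ haY)) hmY
      rw [h1, h2]
  -- disjointness of the argmin fibers
  have hdisj : ∀ a b : α, a ≠ b →
      Disjoint (univ.filter fun σ : Equiv.Perm α =>
          σ a = ((X ∪ Y).image σ).min' (hU.image σ))
        (univ.filter fun σ : Equiv.Perm α =>
          σ b = ((X ∪ Y).image σ).min' (hU.image σ)) := by
    intro a b hab
    rw [Finset.disjoint_left]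
    intro σ h1 h2
    rw [Finset.mem_filter] at h1 h2
    exact hab (σ.injective (h1.2.trans h2.2.symm))
  -- the filtered set splits as a disjoint union over X ∩ Y
  have hsplit : (Finset.univ.filter fun σ : Equiv.Perm α =>
        (X.image σ).min' (hX.image σ) = (Y.image σ).min' (hY.image σ)) =
      (X ∩ Y).biUnion (fun a => univ.filter fun σ : Equiv.Perm α =>
        σ a = ((X ∪ Y).image σ).min' (hU.image σ)) := by
    ext σ
    simp only [Finset.mem_filter, Finset.mem_biUnion, Finset.mem_univ, true_and]
    rw [key σ]
  have hcard1 : (Finset.univ.filter fun σ : Equiv.Perm α =>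
        (X.image σ).min' (hX.image σ) = (Y.image σ).min' (hY.image σ)).card =
      ∑ a ∈ X ∩ Y, c a := by
    rw [hsplit, Finset.card_biUnion fun a _ b _ hab => hdisj a b hab]
  -- the fibers over X ∪ Y cover everything
  have hcover : Finset.univ = (X ∪ Y).biUnion (fun a =>
      univ.filter fun σ : Equiv.Perm α =>
        σ a = ((X ∪ Y).image σ).min' (hU.image σ)) := by
    ext σ
    simp only [Finset.mem_biUnion, Finset.mem_filter, Finset.mem_univ, true_and, true_iff]
    have hmem : ((X ∪ Y).image σ).min' (hU.image σ) ∈ (X ∪ Y).image σ :=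
      min'_mem _ _
    rcases Finset.mem_image.mp hmem with ⟨a, ha, haeq⟩
    exact ⟨a, ha, haeq⟩
  have hsum : ∑ a ∈ X ∪ Y, c a = Fintype.card (Equiv.Perm α) := by
    rw [← Finset.card_biUnion fun a _ b _ hab => hdisj a b hab, ← hcover,
      Finset.card_univ]
  -- constancy of c on X ∪ Y
  have hconst : ∀ a ∈ X ∪ Y, ∀ b ∈ X ∪ Y, c a = c b := by
    intro a ha b hb
    simp only [hc]
    apply Finset.card_bij' (fun σ _ => σ * Equiv.swap a b)
      (fun σ _ => σ * Equiv.swap a b)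
    · intro σ hσ
      rw [Finset.mem_filter] at hσ ⊢
      refine ⟨Finset.mem_univ _, ?_⟩
      have himg' : (X ∪ Y).image ⇑(σ * Equiv.swap a b) = (X ∪ Y).image σ := by
        have : ⇑(σ * Equiv.swap a b) = ⇑σ ∘ ⇑(Equiv.swap a b) := rfl
        rw [this, ← Finset.image_image, himg a ha b hb]
      have h1 : (σ * Equiv.swap a b) b = σ a := by
        simp [Equiv.Perm.mul_apply]
      rw [h1]
      convert hσ.2 using 2
    · intro σ hσ
      rw [Finset.mem_filter] at hσ ⊢
      refine ⟨Finset.mem_univ _, ?_⟩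
      have himg' : (X ∪ Y).image ⇑(σ * Equiv.swap a b) = (X ∪ Y).image σ := by
        have : ⇑(σ * Equiv.swap a b) = ⇑σ ∘ ⇑(Equiv.swap a b) := rfl
        rw [this, ← Finset.image_image, himg a ha b hb]
      have h1 : (σ * Equiv.swap a b) a = σ b := by
        simp [Equiv.Perm.mul_apply]
      rw [h1]
      convert hσ.2 using 2
    · intro σ _
      simp [mul_assoc]
    · intro σ _
      simp [mul_assoc]
  -- pick a base point
  obtain ⟨a₀, ha₀⟩ := hU
  have hsum' : ∑ a ∈ X ∪ Y, c a = (X ∪ Y).card * c a₀ := by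
    rw [Finset.sum_congr rfl fun a ha => hconst a ha a₀ ha₀, Finset.sum_const,
      smul_eq_mul]
  have hcard1' : ∑ a ∈ X ∩ Y, c a = (X ∩ Y).card * c a₀ := by
    rw [Finset.sum_congr rfl fun a ha => hconst a (Finset.mem_union_left _
      (Finset.mem_inter.mp ha).1) a₀ ha₀, Finset.sum_const, smul_eq_mul]
  have hN : (X ∪ Y).card * c a₀ = Fintype.card (Equiv.Perm α) := by
    rw [← hsum', hsum]
  have hNpos : 0 < Fintype.card (Equiv.Perm α) := Fintype.card_pos
  have hc0 : c a₀ ≠ 0 := by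
    intro h
    rw [h, Nat.mul_zero] at hN
    omega
  have hUcard : (X ∪ Y).card ≠ 0 := Finset.card_ne_zero_of_mem ha₀
  rw [hcard1, hcard1', ← hN]
  push_cast
  rw [div_eq_div_iff (mul_ne_zero (Nat.cast_ne_zero.mpr hUcard) (Nat.cast_ne_zero.mpr hc0)) (Nat.cast_ne_zero.mpr hUcard)]
  ring
end
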